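/- arXiv:0904.1479 — 3 statements merged into one kernel-verified Lean document; each statement's English description precedes it below -/
import Mathlib

section
/- λ(F_2) = 1/2, where F_2 = {(0,0,0),(1,1,0),(1,0,1),(0,1,1)} ⊆ V_3; that is, exc(n, F_2)/2^n → 1/2 as n → ∞. -/
open Finset Filter Topology

/-- The weight of a vertex of the hypercube `{0,1}^n`: number of coordinates equal to 1. -/
def cubeWeight {n : ℕ} (x : Fin n → Bool) : ℕ :=
  (Finset.univ.filter fun i => x i = true).card

/-- The support of a vertex of the hypercube: the set of coordinates equal to 1. -/
def cubeSupp {n : ℕ} (x : Fin n → Bool) : Finset (Fin n) :=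
  Finset.univ.filter fun i => x i = true

/-- An embedding of the `d`-dimensional hypercube `Q_d` into `Q_n`: an injective map on
vertices that preserves the edges (pairs at Hamming distance 1). -/
def IsCubeEmbedding {d n : ℕ} (i : (Fin d → Bool) → (Fin n → Bool)) : Prop :=
  Function.Injective i ∧
    ∀ x y : Fin d → Bool, hammingDist x y = 1 → hammingDist (i x) (i y) = 1

/-- `S ⊆ V_n` is `F`-free (for `F ⊆ V_d`) if no embedding `i : Q_d → Q_n` has `i(F) ⊆ S`. -/
def IsFree {d n : ℕ} (F : Set (Fin d → Bool)) (S : Set (Fin n → Bool)) : Prop :=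
  ∀ i : (Fin d → Bool) → (Fin n → Bool), IsCubeEmbedding i → ¬ (i '' F ⊆ S)

/-- `exc n F`: the maximum size of an `F`-free subset of `V_n = {0,1}^n`. -/
noncomputable def exc {d : ℕ} (n : ℕ) (F : Set (Fin d → Bool)) : ℕ :=
  sSup {k : ℕ | ∃ S : Finset (Fin n → Bool), IsFree F (S : Set (Fin n → Bool)) ∧ S.card = k}

/-- F₁ = {(0,0,0),(1,0,0),(0,1,0),(0,0,1)} ⊆ V₃. -/
def F1 : Set (Fin 3 → Bool) :=
  {![false, false, false], ![true, false, false], ![false, true, false], ![false, false, true]}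

/-- F₂ = {(0,0,0),(1,1,0),(1,0,1),(0,1,1)} ⊆ V₃. -/
def F2 : Set (Fin 3 → Bool) :=
  {![false, false, false], ![true, true, false], ![true, false, true], ![false, true, true]}

/-- F₃ = {(0,0,0),(1,1,1)} ⊆ V₃. -/
def F3 : Set (Fin 3 → Bool) :=
  {![false, false, false], ![true, true, true]}


def xv {ι : Type*} (x y : ι → Bool) : ι → Bool := fun t => xor (x t) (y t)
@[simp] lemma xv_apply {ι : Type*} (x y : ι → Bool) (t : ι) : xv x y t = xor (x t) (y t) := rfl
def ev {ι : Type*} [DecidableEq ι] (j : ι) : ι → Bool := fun t => decide (t = j)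

lemma xv_comm {ι : Type*} (x y : ι → Bool) : xv x y = xv y x := by
  funext t; simp [xv, Bool.xor_comm]
lemma xv_assoc {ι : Type*} (x y z : ι → Bool) : xv (xv x y) z = xv x (xv y z) := by
  funext t; simp [xv, Bool.xor_assoc]
@[simp] lemma xv_cancel {ι : Type*} (x u : ι → Bool) : xv (xv x u) u = x := by
  funext t; simp [xv]
@[simp] lemma xv_cancel_left {ι : Type*} (x u : ι → Bool) : xv x (xv x u) = u := by
  funext t; simp [xv, ← Bool.xor_assoc]
@[simp] lemma xv_self {ι : Type*} (x : ι → Bool) : xv x x = fun _ => false := by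
  funext t; simp [xv]
@[simp] lemma xv_false_right {ι : Type*} (x : ι → Bool) : xv x (fun _ => false) = x := by
  funext t; simp [xv]

def wt {ι : Type*} [Fintype ι] (x : ι → Bool) : ℕ := (Finset.univ.filter fun t => x t = true).card

section dist
variable {ι : Type*} [Fintype ι] [DecidableEq ι]
set_option linter.unusedSectionVars false

lemma hammingDist_eq_wt_xv (x y : ι → Bool) : hammingDist x y = wt (xv x y) := by
  unfold hammingDist wt
  congr 1
  apply Finset.filter_congr
  intro t _
  cases hx : x t <;> cases hy : y t <;> simp [hx, hy]

lemma hammingDist_xv_left (a u v : ι → Bool) :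
    hammingDist (xv a u) (xv a v) = hammingDist u v := by
  unfold hammingDist
  congr 1
  apply Finset.filter_congr
  intro t _
  cases h : a t <;> simp [h]

lemma wt_ev (j : ι) : wt (ev j) = 1 := by
  unfold wt
  rw [show (Finset.univ.filter fun t => ev j t = true) = {j} by ext t; simp [ev]]
  simp

lemma wt_xv_ev {p q : ι} (h : p ≠ q) : wt (xv (ev p) (ev q)) = 2 := by
  unfold wt
  rw [show (Finset.univ.filter fun t => xv (ev p) (ev q) t = true) = {p, q} by
    ext t
    by_cases hp : t = p <;> by_cases hq : t = q <;> simp [ev, xv, hp, hq] <;> simp_all]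
  rw [Finset.card_insert_of_notMem (by simp [h]), Finset.card_singleton]

lemma wt_xv_ev3 {p q s : ι} (hpq : p ≠ q) (hps : p ≠ s) (hqs : q ≠ s) :
    wt (xv (ev q) (xv (ev p) (ev s))) = 3 := by
  unfold wt
  rw [show (Finset.univ.filter fun t => xv (ev q) (xv (ev p) (ev s)) t = true) = {p, q, s} by
    ext t
    by_cases hp : t = p <;> by_cases hq : t = q <;> by_cases hs : t = s <;>
      simp [ev, xv, hp, hq, hs] <;> simp_all]
  rw [Finset.card_insert_of_notMem (by simp [hpq, hps]),
    Finset.card_insert_of_notMem (by simp [hqs]), Finset.card_singleton]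

lemma exists_flip_of_dist_one {x y : ι → Bool} (h : hammingDist x y = 1) :
    ∃ p, y = xv x (ev p) := by
  unfold hammingDist at h
  rw [Finset.card_eq_one] at h
  obtain ⟨p, hp⟩ := h
  refine ⟨p, funext fun t => ?_⟩
  by_cases ht : t = p
  · subst ht
    have : t ∈ Finset.univ.filter fun i => x i ≠ y i := by rw [hp]; simp
    simp only [Finset.mem_filter] at this
    cases hx : x t <;> cases hy : y t <;> simp_all [ev, xv]
  · have : t ∉ Finset.univ.filter fun i => x i ≠ y i := by rw [hp]; simp [ht]
    simp only [Finset.mem_filter, Finset.mem_univ, true_and, not_not] at this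
    simp [xv, ev, ht, this]

/-- key step: the fourth corner of a square is determined -/
lemma square_step {a x : ι → Bool} {p q : ι} (hpq : p ≠ q)
    (h1 : hammingDist (xv a (ev p)) x = 1) (h2 : hammingDist (xv a (ev q)) x = 1)
    (hne : x ≠ a) : x = xv a (xv (ev p) (ev q)) := by
  obtain ⟨s, hs⟩ := exists_flip_of_dist_one h1
  rw [xv_assoc] at hs
  by_cases hsp : s = p
  · exfalso; apply hne; rw [hs, hsp]; simp
  by_cases hsq : s = q
  · rw [hs, hsq]
  exfalso
  rw [hs, hammingDist_xv_left, hammingDist_eq_wt_xv,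
    wt_xv_ev3 hpq (Ne.symm hsp) (Ne.symm hsq)] at h2
  omega

end dist

/-- classification of images of F2 under cube embeddings -/
lemma embedding_image_F2 {n : ℕ} {i : (Fin 3 → Bool) → (Fin n → Bool)}
    (h : IsCubeEmbedding i) :
    ∃ (a : Fin n → Bool) (p q r : Fin n), p ≠ q ∧ p ≠ r ∧ q ≠ r ∧
      i ![false,false,false] = a ∧
      i ![true,true,false] = xv a (xv (ev p) (ev q)) ∧
      i ![true,false,true] = xv a (xv (ev p) (ev r)) ∧
      i ![false,true,true] = xv a (xv (ev q) (ev r)) := by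
  obtain ⟨hinj, hedge⟩ := h
  set a := i ![false,false,false] with ha
  obtain ⟨p, hp⟩ := exists_flip_of_dist_one
    (hedge ![false,false,false] ![true,false,false] (by decide))
  obtain ⟨q, hq⟩ := exists_flip_of_dist_one
    (hedge ![false,false,false] ![false,true,false] (by decide))
  obtain ⟨r, hr⟩ := exists_flip_of_dist_one
    (hedge ![false,false,false] ![false,false,true] (by decide))
  have hpq : p ≠ q := by
    rintro rfl
    exact (by decide : ¬(![true,false,false] = ![false,true,false]))
      (hinj (hp ▸ hq ▸ rfl))
  have hpr : p ≠ r := by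
    rintro rfl
    exact (by decide : ¬(![true,false,false] = ![false,false,true]))
      (hinj (hp ▸ hr ▸ rfl))
  have hqr : q ≠ r := by
    rintro rfl
    exact (by decide : ¬(![false,true,false] = ![false,false,true]))
      (hinj (hq ▸ hr ▸ rfl))
  refine ⟨a, p, q, r, hpq, hpr, hqr, rfl, ?_, ?_, ?_⟩
  · apply square_step hpq
    · rw [← hp]; exact hedge _ _ (by decide)
    · rw [← hq]; exact hedge _ _ (by decide)
    · intro hcon
      exact (by decide : ¬(![true,true,false] = ![false,false,false])) (hinj hcon)
  · apply square_step hpr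
    · rw [← hp]; exact hedge _ _ (by decide)
    · rw [← hr]; exact hedge _ _ (by decide)
    · intro hcon
      exact (by decide : ¬(![true,false,true] = ![false,false,false])) (hinj hcon)
  · apply square_step hqr
    · rw [← hq]; exact hedge _ _ (by decide)
    · rw [← hr]; exact hedge _ _ (by decide)
    · intro hcon
      exact (by decide : ¬(![false,true,true] = ![false,false,false])) (hinj hcon)

lemma hammingDist_flip {ι : Type*} [Fintype ι] [DecidableEq ι] (x u : ι → Bool) :
    hammingDist x (xv x u) = wt u := by
  rw [hammingDist_eq_wt_xv, xv_cancel_left]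

/-- the xor-linear map sending Q3 into Qn along coordinates j k l -/
def Lmap {n : ℕ} (j k l : Fin n) (z : Fin 3 → Bool) : Fin n → Bool :=
  fun t => xor (z 0 && decide (t = j)) (xor (z 1 && decide (t = k)) (z 2 && decide (t = l)))

lemma boolxor9 (a b c x1 x2 x3 y1 y2 y3 : Bool) :
    (xor ((xor x1 y1) && a) (xor ((xor x2 y2) && b) ((xor x3 y3) && c))) =
      xor (xor (x1 && a) (xor (x2 && b) (x3 && c))) (xor (y1 && a) (xor (y2 && b) (y3 && c))) := by
  cases a <;> cases b <;> cases c <;> cases x1 <;> cases x2 <;> cases x3 <;>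
    cases y1 <;> cases y2 <;> cases y3 <;> rfl

lemma Lmap_linear {n : ℕ} (j k l : Fin n) (z w : Fin 3 → Bool) :
    Lmap j k l (xv z w) = xv (Lmap j k l z) (Lmap j k l w) := by
  funext t
  simp only [Lmap, xv_apply]
  exact boolxor9 _ _ _ _ _ _ _ _ _

lemma Lmap_ev0 {n : ℕ} (j k l : Fin n) : Lmap j k l (ev 0) = ev j := by
  funext t; simp [Lmap, ev]

lemma Lmap_ev1 {n : ℕ} (j k l : Fin n) : Lmap j k l (ev 1) = ev k := by
  funext t; simp [Lmap, ev]

lemma Lmap_ev2 {n : ℕ} (j k l : Fin n) : Lmap j k l (ev 2) = ev l := by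
  funext t; simp [Lmap, ev]

lemma not_tetra {n : ℕ} {S : Finset (Fin n → Bool)} (hfree : IsFree F2 (S : Set (Fin n → Bool)))
    {y : Fin n → Bool} (hy : y ∈ S) {j k l : Fin n} (hjk : j ≠ k) (hjl : j ≠ l) (hkl : k ≠ l)
    (h1 : xv y (xv (ev j) (ev k)) ∈ S) (h2 : xv y (xv (ev j) (ev l)) ∈ S)
    (h3 : xv y (xv (ev k) (ev l)) ∈ S) : False := by
  set i : (Fin 3 → Bool) → (Fin n → Bool) := fun z => xv y (Lmap j k l z) with hi
  have hiapp : ∀ z, i z = xv y (Lmap j k l z) := fun z => rfl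
  have hemb : IsCubeEmbedding i := by
    constructor
    · intro z w hzw
      have hL : Lmap j k l z = Lmap j k l w := by
        rw [hiapp, hiapp] at hzw
        funext t
        have := congrFun hzw t
        simp only [xv_apply] at this
        cases hyt : y t <;> simp [hyt] at this <;> assumption
      have djk : (decide (j = k)) = false := by simp [hjk]
      have djl : (decide (j = l)) = false := by simp [hjl]
      have dkj : (decide (k = j)) = false := by simp [Ne.symm hjk]
      have dkl : (decide (k = l)) = false := by simp [hkl]
      have dlj : (decide (l = j)) = false := by simp [Ne.symm hjl]
      have dlk : (decide (l = k)) = false := by simp [Ne.symm hkl]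
      have h0 : z 0 = w 0 := by
        have := congrFun hL j
        simpa [Lmap, djk, djl] using this
      have h1' : z 1 = w 1 := by
        have := congrFun hL k
        simpa [Lmap, dkj, dkl] using this
      have h2' : z 2 = w 2 := by
        have := congrFun hL l
        simpa [Lmap, dlj, dlk] using this
      funext t
      fin_cases t <;> assumption
    · intro z w hzw
      obtain ⟨s, rfl⟩ := exists_flip_of_dist_one hzw
      have hrw : i (xv z (ev s)) = xv (i z) (Lmap j k l (ev s)) := by
        rw [hiapp, hiapp, Lmap_linear, xv_assoc]
      rw [hrw, hammingDist_flip]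
      fin_cases s
      · rw [show (⟨0, by omega⟩ : Fin 3) = (0 : Fin 3) from rfl, Lmap_ev0]; exact wt_ev j
      · rw [show (⟨1, by omega⟩ : Fin 3) = (1 : Fin 3) from rfl, Lmap_ev1]; exact wt_ev k
      · rw [show (⟨2, by omega⟩ : Fin 3) = (2 : Fin 3) from rfl, Lmap_ev2]; exact wt_ev l
  apply hfree i hemb
  rintro w ⟨v, hv, rfl⟩
  have e000 : i ![false, false, false] = y := by
    rw [hiapp]; funext t; simp [Lmap]
  have e110 : i ![true, true, false] = xv y (xv (ev j) (ev k)) := by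
    rw [hiapp]; funext t; simp [Lmap, ev]
  have e101 : i ![true, false, true] = xv y (xv (ev j) (ev l)) := by
    rw [hiapp]; funext t; simp [Lmap, ev]
  have e011 : i ![false, true, true] = xv y (xv (ev k) (ev l)) := by
    rw [hiapp]; funext t; simp [Lmap, ev]
  simp only [F2, Set.mem_insert_iff, Set.mem_singleton_iff] at hv
  rcases hv with rfl | rfl | rfl | rfl
  · rw [e000]; exact hy
  · rw [e110]; exact h1
  · rw [e101]; exact h2
  · rw [e011]; exact h3

section mantel
variable {α : Type*} [Fintype α] [DecidableEq α]

/-- Mantel's theorem, ordered-pairs version. -/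
lemma mantel_ordered (r : α → α → Prop) [DecidableRel r]
    (hsym : ∀ a b, r a b → r b a)
    (htri : ∀ a b c, r a b → r a c → r b c → False) :
    2 * ((univ ×ˢ univ).filter fun p : α × α => r p.1 p.2).card ≤ (Fintype.card α) ^ 2 := by
  classical
  set N := Fintype.card α with hN
  set deg : α → ℕ := fun a => (univ.filter fun b => r a b).card with hdeg
  set O := (univ ×ˢ univ).filter fun p : α × α => r p.1 p.2 with hO
  have hOcard : O.card = ∑ a, deg a := by
    rw [hO, Finset.card_filter, Finset.sum_product]
    simp only [hdeg, Finset.card_filter]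
  have hdegsum : ∀ a b, r a b → deg a + deg b ≤ N := by
    intro a b hab
    have hdisj : Disjoint (univ.filter fun c => r a c) (univ.filter fun c => r b c) := by
      rw [Finset.disjoint_left]
      intro c hc hc'
      simp only [Finset.mem_filter] at hc hc'
      exact htri a b c hab hc.2 hc'.2
    calc deg a + deg b = ((univ.filter fun c => r a c) ∪ (univ.filter fun c => r b c)).card :=
          (Finset.card_union_of_disjoint hdisj).symm
      _ ≤ (univ : Finset α).card := Finset.card_le_card (Finset.subset_univ _)
      _ = N := Finset.card_univ
  have hsum1 : ∑ p ∈ O, deg p.1 = ∑ a, (deg a) ^ 2 := by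
    rw [hO, Finset.sum_filter, Finset.sum_product]
    congr 1
    funext a
    show (∑ b : α, if r a b then deg a else 0) = (deg a) ^ 2
    rw [← Finset.sum_filter, Finset.sum_const, smul_eq_mul]
    show deg a * deg a = deg a ^ 2
    ring
  have hsum2 : ∑ p ∈ O, deg p.2 = ∑ a, (deg a) ^ 2 := by
    rw [hO, Finset.sum_filter, Finset.sum_product, Finset.sum_comm]
    congr 1
    funext b
    show (∑ a : α, if r a b then deg b else 0) = (deg b) ^ 2
    rw [← Finset.sum_filter, Finset.sum_const, smul_eq_mul]
    have : (univ.filter fun a => r a b) = (univ.filter fun a => r b a) := by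
      apply Finset.filter_congr
      intro a _
      exact ⟨fun h => hsym _ _ h, fun h => hsym _ _ h⟩
    rw [this]
    show deg b * deg b = deg b ^ 2
    ring
  have hkey : 2 * ∑ a, (deg a) ^ 2 ≤ O.card * N := by
    have h1 : ∑ p ∈ O, (deg p.1 + deg p.2) ≤ O.card * N := by
      calc ∑ p ∈ O, (deg p.1 + deg p.2) ≤ ∑ _p ∈ O, N := by
            apply Finset.sum_le_sum
            intro p hp
            rw [hO, Finset.mem_filter] at hp
            exact hdegsum _ _ hp.2
        _ = O.card * N := by rw [Finset.sum_const, smul_eq_mul]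
    rw [Finset.sum_add_distrib, hsum1, hsum2] at h1
    omega
  have hcs : O.card ^ 2 ≤ N * ∑ a, (deg a) ^ 2 := by
    rw [hOcard]
    have := sq_sum_le_card_mul_sum_sq (s := (univ : Finset α)) (f := deg)
    simpa [hN] using this
  rcases Nat.eq_zero_or_pos O.card with h0 | hpos
  · rw [h0]; positivity
  · have : O.card * (2 * O.card) ≤ O.card * N ^ 2 := by
      calc O.card * (2 * O.card) = 2 * O.card ^ 2 := by ring
        _ ≤ 2 * (N * ∑ a, (deg a) ^ 2) := by omega
        _ = N * (2 * ∑ a, (deg a) ^ 2) := by ring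
        _ ≤ N * (O.card * N) := Nat.mul_le_mul_left _ hkey
        _ = O.card * N ^ 2 := by ring
    exact Nat.le_of_mul_le_mul_left this hpos

end mantel

lemma ite_one_mul_ite_one {P Q : Prop} [Decidable P] [Decidable Q] :
    (if P then (1:ℕ) else 0) * (if Q then (1:ℕ) else 0) = if P ∧ Q then 1 else 0 := by
  by_cases hP : P <;> by_cases hQ : Q <;> simp [hP, hQ]

lemma card_filter_xv {ι : Type*} [Fintype ι] [DecidableEq ι] (u : ι → Bool)
    (P : (ι → Bool) → Prop) [DecidablePred P] :
    (univ.filter fun x => P (xv x u)).card = (univ.filter fun z => P z).card := by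
  apply Finset.card_bij' (fun x _ => xv x u) (fun z _ => xv z u)
  · intro x hx
    simp only [Finset.mem_filter, Finset.mem_univ, true_and] at hx ⊢
    exact hx
  · intro z hz
    simp only [Finset.mem_filter, Finset.mem_univ, true_and] at hz ⊢
    rw [xv_cancel]
    exact hz
  · intro x _; rw [xv_cancel]
  · intro z _; rw [xv_cancel]

theorem free_card_bound {n : ℕ} {S : Finset (Fin n → Bool)}
    (hfree : IsFree F2 (S : Set (Fin n → Bool))) :
    2 * n * S.card ≤ 2 * 2 ^ n + n * 2 ^ n := by
  classical
  set m := S.card with hm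
  have hN : (univ : Finset (Fin n → Bool)).card = 2 ^ n := by
    rw [Finset.card_univ, Fintype.card_fun]
    simp
  set G : (Fin n → Bool) → ℕ := fun x => (univ.filter fun j => xv x (ev j) ∈ S).card with hG
  have hSfilter : (univ.filter fun z : Fin n → Bool => z ∈ S) = S := by
    ext z; simp
  have hsumG : ∑ x, G x = n * m := by
    simp only [hG, Finset.card_filter]
    rw [Finset.sum_comm]
    have hrow : ∀ j : Fin n, (∑ x : Fin n → Bool, if xv x (ev j) ∈ S then (1:ℕ) else 0) = m := by
      intro j
      rw [← Finset.card_filter, card_filter_xv (ev j) (· ∈ S), hSfilter]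
    rw [Finset.sum_congr rfl fun j _ => hrow j, Finset.sum_const, smul_eq_mul,
      Finset.card_univ, Fintype.card_fin]
  set cnt : (Fin n → Bool) → ℕ := fun y =>
    ((univ ×ˢ univ).filter fun p : Fin n × Fin n =>
      p.1 ≠ p.2 ∧ xv y (xv (ev p.1) (ev p.2)) ∈ S).card with hcnt
  -- the off-diagonal pair count
  have hA : ∀ j k : Fin n, j ≠ k →
      (∑ x : Fin n → Bool, if xv x (ev j) ∈ S ∧ xv x (ev k) ∈ S then (1:ℕ) else 0)
        = (S.filter fun z => xv z (xv (ev j) (ev k)) ∈ S).card := by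
    intro j k hjk
    rw [← Finset.card_filter]
    have h1 : (univ.filter fun x : Fin n → Bool => xv x (ev j) ∈ S ∧ xv x (ev k) ∈ S)
        = (univ.filter fun x => (fun z => z ∈ S ∧ xv z (xv (ev j) (ev k)) ∈ S) (xv x (ev j))) := by
      apply Finset.filter_congr
      intro x _
      constructor
      · rintro ⟨h1, h2⟩
        refine ⟨h1, ?_⟩
        rwa [← xv_assoc, xv_cancel]
      · rintro ⟨h1, h2⟩
        rw [← xv_assoc, xv_cancel] at h2
        exact ⟨h1, h2⟩
    rw [h1, card_filter_xv (ev j) (fun z => z ∈ S ∧ xv z (xv (ev j) (ev k)) ∈ S)]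
    congr 1
    ext z
    simp [Finset.mem_filter]
  have hsumG2 : ∑ x, (G x) ^ 2 = n * m + ∑ y ∈ S, cnt y := by
    have hGx : ∀ x, (G x) ^ 2 = ∑ p ∈ (univ ×ˢ univ : Finset (Fin n × Fin n)),
        (if xv x (ev p.1) ∈ S ∧ xv x (ev p.2) ∈ S then (1:ℕ) else 0) := by
      intro x
      rw [hG]
      simp only [Finset.card_filter]
      rw [sq, Finset.sum_mul_sum, Finset.sum_product]
      congr 1; funext j
      congr 1; funext k
      exact ite_one_mul_ite_one
    calc ∑ x, (G x) ^ 2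
        = ∑ p ∈ (univ ×ˢ univ : Finset (Fin n × Fin n)), ∑ x : Fin n → Bool,
            (if xv x (ev p.1) ∈ S ∧ xv x (ev p.2) ∈ S then (1:ℕ) else 0) := by
          rw [Finset.sum_congr rfl fun x _ => hGx x, Finset.sum_comm]
      _ = n * m + ∑ y ∈ S, cnt y := ?_
    rw [← Finset.sum_filter_add_sum_filter_not (univ ×ˢ univ)
      (fun p : Fin n × Fin n => p.1 = p.2)]
    congr 1
    · -- diagonal part
      have hdiagval : ∀ p : Fin n × Fin n, p ∈ (univ ×ˢ univ).filter
          (fun p : Fin n × Fin n => p.1 = p.2) → (∑ x : Fin n → Bool,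
            (if xv x (ev p.1) ∈ S ∧ xv x (ev p.2) ∈ S then (1:ℕ) else 0)) = m := by
        intro p hp
        simp only [Finset.mem_filter] at hp
        rw [← hp.2]
        have : ∀ x : Fin n → Bool, (if xv x (ev p.1) ∈ S ∧ xv x (ev p.1) ∈ S then (1:ℕ) else 0)
            = (if xv x (ev p.1) ∈ S then (1:ℕ) else 0) := by
          intro x; by_cases h : xv x (ev p.1) ∈ S <;> simp [h]
        rw [Finset.sum_congr rfl fun x _ => this x, ← Finset.card_filter,
          card_filter_xv (ev p.1) (· ∈ S), hSfilter]
      rw [Finset.sum_congr rfl hdiagval, Finset.sum_const, smul_eq_mul]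
      congr 1
      -- card of diagonal = n
      rw [show ((univ ×ˢ univ).filter fun p : Fin n × Fin n => p.1 = p.2) = Finset.diag univ by
        ext p; simp [Finset.mem_diag]]
      rw [Finset.diag_card, Finset.card_univ, Fintype.card_fin]
    · -- off-diagonal part
      have hoffval : ∀ p : Fin n × Fin n, p ∈ (univ ×ˢ univ).filter
          (fun p : Fin n × Fin n => ¬ p.1 = p.2) → (∑ x : Fin n → Bool,
            (if xv x (ev p.1) ∈ S ∧ xv x (ev p.2) ∈ S then (1:ℕ) else 0))
          = ∑ y ∈ S, (if xv y (xv (ev p.1) (ev p.2)) ∈ S then (1:ℕ) else 0) := by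
        intro p hp
        simp only [Finset.mem_filter] at hp
        rw [hA p.1 p.2 hp.2, Finset.card_filter]
      rw [Finset.sum_congr rfl hoffval, Finset.sum_comm]
      apply Finset.sum_congr rfl
      intro y _
      rw [← Finset.card_filter, Finset.filter_filter, hcnt]
  -- Mantel bound on each cnt y
  have hmantel : ∀ y ∈ S, 2 * cnt y ≤ n ^ 2 := by
    intro y hy
    have := mantel_ordered (α := Fin n)
      (fun a b => a ≠ b ∧ xv y (xv (ev a) (ev b)) ∈ S)
      (fun a b hab => ⟨hab.1.symm, by rw [xv_comm (ev b) (ev a)]; exact hab.2⟩)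
      (fun a b c hab hac hbc =>
        not_tetra hfree hy hab.1 hac.1 hbc.1 hab.2 hac.2 hbc.2)
    rwa [Fintype.card_fin, hcnt] at *
  have hC : 2 * (∑ y ∈ S, cnt y) ≤ m * n ^ 2 := by
    rw [Finset.mul_sum]
    calc ∑ y ∈ S, 2 * cnt y ≤ ∑ _y ∈ S, n ^ 2 :=
          Finset.sum_le_sum fun y hy => hmantel y hy
      _ = m * n ^ 2 := by rw [Finset.sum_const, smul_eq_mul, hm]
  -- Cauchy-Schwarz
  have hcs : (n * m) ^ 2 ≤ 2 ^ n * (n * m + ∑ y ∈ S, cnt y) := by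
    rw [← hsumG2, ← hsumG]
    have := sq_sum_le_card_mul_sum_sq (s := (univ : Finset (Fin n → Bool))) (f := G)
    rw [hN] at this
    simpa using this
  -- final algebra
  rcases Nat.eq_zero_or_pos m with h0 | hmpos
  · rw [h0]; simp
  rcases Nat.eq_zero_or_pos n with hn0 | hnpos
  · rw [hn0]; simp
  have key : m * (n * (2 * n * m)) ≤ m * (n * (2 * 2 ^ n + n * 2 ^ n)) := by
    calc m * (n * (2 * n * m)) = 2 * (n * m) ^ 2 := by ring
      _ ≤ 2 * (2 ^ n * (n * m + ∑ y ∈ S, cnt y)) := by omega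
      _ = 2 ^ n * (2 * (n * m)) + 2 ^ n * (2 * (∑ y ∈ S, cnt y)) := by ring
      _ ≤ 2 ^ n * (2 * (n * m)) + 2 ^ n * (m * n ^ 2) := by
          have := Nat.mul_le_mul_left (2 ^ n) hC
          omega
      _ = m * (n * (2 * 2 ^ n + n * 2 ^ n)) := by ring
  exact Nat.le_of_mul_le_mul_left (Nat.le_of_mul_le_mul_left key hmpos) hnpos

lemma choose2_add_two (w : ℕ) : (w + 2).choose 2 = w.choose 2 + (2 * w + 1) := by
  have h1 : (w + 2).choose 2 = (w + 1).choose 1 + (w + 1).choose 2 := Nat.choose_succ_succ (w+1) 1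
  have h2 : (w + 1).choose 2 = w.choose 1 + w.choose 2 := Nat.choose_succ_succ w 1
  rw [h1, h2, Nat.choose_one_right, Nat.choose_one_right]
  ring

lemma wt_xv_flip_up {n : ℕ} {a : Fin n → Bool} {u v : Fin n} (huv : u ≠ v)
    (hu : a u = false) (hv : a v = false) :
    wt (xv a (xv (ev u) (ev v))) = wt a + 2 := by
  unfold wt
  have hset : (univ.filter fun t => xv a (xv (ev u) (ev v)) t = true)
      = insert u (insert v (univ.filter fun t => a t = true)) := by
    ext t
    by_cases ht : t = u
    · simp [xv, ev, ht, hu, huv]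
    · by_cases ht2 : t = v
      · simp [xv, ev, ht2, hv, (Ne.symm huv : v ≠ u)]
      · simp [xv, ev, ht, ht2]
  rw [hset]
  rw [Finset.card_insert_of_notMem (by simp [hu, huv]),
    Finset.card_insert_of_notMem (by simp [hv])]

lemma even_flip_ne {n : ℕ} {a : Fin n → Bool} {u v : Fin n} (huv : u ≠ v) (h : a u = a v)
    (ha : Even ((wt a).choose 2)) : ¬ Even ((wt (xv a (xv (ev u) (ev v)))).choose 2) := by
  cases hau : a u with
  | false =>
    have hav : a v = false := by rw [← h, hau]
    rw [wt_xv_flip_up huv hau hav, choose2_add_two]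
    rw [Nat.even_iff] at ha ⊢
    omega
  | true =>
    set b := xv a (xv (ev u) (ev v)) with hb
    have hbu : b u = false := by simp [hb, xv, ev, hau, huv]
    have hav : a v = true := by rw [← h, hau]
    have hbv : b v = false := by simp [hb, xv, ev, hav, (Ne.symm huv : v ≠ u)]
    have hab : wt a = wt b + 2 := by
      have : a = xv b (xv (ev u) (ev v)) := by rw [hb, xv_cancel]
      rw [this, wt_xv_flip_up huv hbu hbv]
    rw [hab, choose2_add_two] at ha
    rw [Nat.even_iff] at ha ⊢
    omega

/-- the extremal construction: vertices with `binom(weight, 2)` even -/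
def qSet (n : ℕ) : Finset (Fin n → Bool) := univ.filter fun x => Even ((wt x).choose 2)

lemma qSet_free (n : ℕ) : IsFree F2 ((qSet n : Finset (Fin n → Bool)) : Set (Fin n → Bool)) := by
  intro i hi hsub
  obtain ⟨a, p, q, r, hpq, hpr, hqr, h0, h110, h101, h011⟩ := embedding_image_F2 hi
  have mem : ∀ v ∈ F2, i v ∈ qSet n := by
    intro v hv
    have := hsub (Set.mem_image_of_mem i hv)
    simpa using this
  have m000 := mem _ (show ![false,false,false] ∈ F2 by simp [F2])
  have m110 := mem _ (show ![true,true,false] ∈ F2 by simp [F2])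
  have m101 := mem _ (show ![true,false,true] ∈ F2 by simp [F2])
  have m011 := mem _ (show ![false,true,true] ∈ F2 by simp [F2])
  rw [h0] at m000; rw [h110] at m110; rw [h101] at m101; rw [h011] at m011
  simp only [qSet, Finset.mem_filter, Finset.mem_univ, true_and] at m000 m110 m101 m011
  have hpig : a p = a q ∨ a p = a r ∨ a q = a r := by
    cases h1 : a p <;> cases h2 : a q <;> cases h3 : a r <;> simp [h1, h2, h3]
  rcases hpig with h | h | h
  · exact even_flip_ne hpq h m000 m110
  · exact even_flip_ne hpr h m000 m101
  · exact even_flip_ne hqr h m000 m011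

noncomputable def Dseq (n : ℕ) : ℤ := ∑ x : Fin n → Bool, (-1 : ℤ) ^ ((wt x).choose 2)
noncomputable def Eseq (n : ℕ) : ℤ := ∑ x : Fin n → Bool, (-1 : ℤ) ^ ((wt x).choose 2 + wt x)

lemma sum_split {n : ℕ} (g : (Fin (n+1) → Bool) → ℤ) :
    ∑ y : Fin (n+1) → Bool, g y
      = ∑ x : Fin n → Bool, (g (Fin.cons false x) + g (Fin.cons true x)) := by
  rw [← Fintype.sum_equiv (Fin.consEquiv (fun _ : Fin (n+1) => Bool))
    (fun p => g ((Fin.consEquiv (fun _ : Fin (n+1) => Bool)) p)) g (fun p => rfl)]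
  rw [Fintype.sum_prod_type, Fintype.sum_bool]
  rw [← Finset.sum_add_distrib]
  apply Finset.sum_congr rfl
  intro x _
  rw [add_comm]
  rfl

lemma wt_cons {n : ℕ} (b : Bool) (x : Fin n → Bool) :
    wt (Fin.cons b x : Fin (n+1) → Bool) = (if b then 1 else 0) + wt x := by
  unfold wt
  rw [Finset.card_filter, Finset.card_filter]
  have h : (fun i : Fin (n+1) => if (Fin.cons b x : Fin (n+1) → Bool) i = true then (1:ℕ) else 0)
      = Fin.cons (α := fun _ => ℕ) (if b then 1 else 0) (fun i => if x i = true then 1 else 0) := by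
    funext i
    refine Fin.cases ?_ ?_ i
    · simp
    · intro j; simp
  calc (∑ i, if (Fin.cons b x : Fin (n+1) → Bool) i = true then (1:ℕ) else 0)
      = ∑ i, Fin.cons (α := fun _ => ℕ) (if b then 1 else 0) (fun i => if x i = true then 1 else 0) i := by
        rw [h]
    _ = (if b then 1 else 0) + ∑ i, (if x i = true then (1:ℕ) else 0) := Fin.sum_cons _ _

lemma choose2_succ (w : ℕ) : (w + 1).choose 2 = w.choose 2 + w := by
  rw [Nat.choose_succ_succ w 1, Nat.choose_one_right]; ring

lemma Dseq_succ (n : ℕ) : Dseq (n + 1) = Dseq n + Eseq n := by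
  unfold Dseq Eseq
  rw [sum_split, ← Finset.sum_add_distrib]
  apply Finset.sum_congr rfl
  intro x _
  rw [wt_cons, wt_cons]
  simp only [if_true, if_false, Bool.false_eq_true]
  congr 2
  · rw [zero_add]
  · rw [show 1 + wt x = wt x + 1 from by ring, choose2_succ]

lemma Eseq_succ (n : ℕ) : Eseq (n + 1) = Eseq n - Dseq n := by
  unfold Dseq Eseq
  rw [sum_split, sub_eq_add_neg, ← Finset.sum_neg_distrib, ← Finset.sum_add_distrib]
  apply Finset.sum_congr rfl
  intro x _
  rw [wt_cons, wt_cons]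
  simp only [if_true, if_false, Bool.false_eq_true, zero_add]
  congr 1
  rw [show 1 + wt x = wt x + 1 from by ring, choose2_succ]
  rw [show (wt x).choose 2 + wt x + (wt x + 1) = ((wt x).choose 2) + (2 * wt x + 1) from by ring]
  rw [pow_add]
  have : (-1 : ℤ) ^ (2 * wt x + 1) = -1 := Odd.neg_one_pow ⟨wt x, rfl⟩
  rw [this]
  ring

lemma Dseq_zero : Dseq 0 = 1 := by
  unfold Dseq
  have h : ∀ x : Fin 0 → Bool, (-1 : ℤ) ^ ((wt x).choose 2) = 1 := by
    intro x
    simp [wt]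
  rw [Finset.sum_congr rfl fun x _ => h x, Finset.sum_const]
  simp

lemma Eseq_zero : Eseq 0 = 1 := by
  unfold Eseq
  have h : ∀ x : Fin 0 → Bool, (-1 : ℤ) ^ ((wt x).choose 2 + wt x) = 1 := by
    intro x
    simp [wt]
  rw [Finset.sum_congr rfl fun x _ => h x, Finset.sum_const]
  simp

lemma DEsq (n : ℕ) : Dseq n ^ 2 + Eseq n ^ 2 = 2 ^ (n + 1) := by
  induction n with
  | zero => rw [Dseq_zero, Eseq_zero]; norm_num
  | succ n ih =>
    rw [Dseq_succ, Eseq_succ]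
    have : (Dseq n + Eseq n) ^ 2 + (Eseq n - Dseq n) ^ 2 = 2 * (Dseq n ^ 2 + Eseq n ^ 2) := by
      ring
    rw [this, ih]
    ring

lemma two_card_qSet (n : ℕ) : 2 * ((qSet n).card : ℤ) = 2 ^ n + Dseq n := by
  have hsplit := Finset.sum_filter_add_sum_filter_not (univ : Finset (Fin n → Bool))
    (fun x => Even ((wt x).choose 2)) (fun x => (-1 : ℤ) ^ ((wt x).choose 2))
  have h1 : ∑ x ∈ (univ.filter fun x : Fin n → Bool => Even ((wt x).choose 2)),
      (-1 : ℤ) ^ ((wt x).choose 2) = ((qSet n).card : ℤ) := by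
    rw [Finset.sum_congr rfl (fun x hx => Even.neg_one_pow (Finset.mem_filter.mp hx).2),
      Finset.sum_const, qSet]
    simp
  have h2 : ∑ x ∈ (univ.filter fun x : Fin n → Bool => ¬ Even ((wt x).choose 2)),
      (-1 : ℤ) ^ ((wt x).choose 2)
      = -(((univ.filter fun x : Fin n → Bool => ¬ Even ((wt x).choose 2)).card : ℤ)) := by
    rw [Finset.sum_congr rfl (fun x hx =>
      Odd.neg_one_pow (Nat.not_even_iff_odd.mp (Finset.mem_filter.mp hx).2)),
      Finset.sum_const]
    simp
  have hcards : (qSet n).card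
      + (univ.filter fun x : Fin n → Bool => ¬ Even ((wt x).choose 2)).card = 2 ^ n := by
    rw [qSet]
    rw [Finset.card_filter_add_card_filter_not]
    rw [Finset.card_univ, Fintype.card_fun]
    simp
  have hD : Dseq n = ((qSet n).card : ℤ)
      - (((univ.filter fun x : Fin n → Bool => ¬ Even ((wt x).choose 2)).card : ℤ)) := by
    rw [Dseq, ← hsplit, h1, h2]
    ring
  have hcast : ((qSet n).card : ℤ)
      + (((univ.filter fun x : Fin n → Bool => ¬ Even ((wt x).choose 2)).card : ℤ)) = 2 ^ n := by
    exact_mod_cast congrArg (Nat.cast : ℕ → ℤ) hcards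
  linarith

lemma exc_set_nonempty (n : ℕ) :
    {k : ℕ | ∃ S : Finset (Fin n → Bool), IsFree F2 (S : Set (Fin n → Bool)) ∧ S.card = k}.Nonempty := by
  refine ⟨0, ∅, ?_, Finset.card_empty⟩
  intro i hi hsub
  have : i ![false,false,false] ∈ ((∅ : Finset (Fin n → Bool)) : Set (Fin n → Bool)) :=
    hsub (Set.mem_image_of_mem i (by simp [F2]))
  simpa using this

lemma exc_set_bdd (n : ℕ) :
    BddAbove {k : ℕ | ∃ S : Finset (Fin n → Bool), IsFree F2 (S : Set (Fin n → Bool)) ∧ S.card = k} := by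
  refine ⟨2 ^ n, ?_⟩
  rintro k ⟨S, _, rfl⟩
  calc S.card ≤ (univ : Finset (Fin n → Bool)).card := Finset.card_le_univ S
    _ = 2 ^ n := by rw [Finset.card_univ, Fintype.card_fun]; simp

lemma exc_upper (n : ℕ) : 2 * n * exc n F2 ≤ 2 * 2 ^ n + n * 2 ^ n := by
  obtain ⟨S, hfree, hcard⟩ := Nat.sSup_mem (exc_set_nonempty n) (exc_set_bdd n)
  rw [exc, ← hcard]
  exact free_card_bound hfree

lemma exc_lower (n : ℕ) : (qSet n).card ≤ exc n F2 :=
  le_csSup (exc_set_bdd n) ⟨qSet n, qSet_free n, rfl⟩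

theorem lambda_F2' :
    Filter.Tendsto (fun n : ℕ => (exc n F2 : ℝ) / 2 ^ n) Filter.atTop (nhds (1 / 2)) := by
  have hs2 : (1:ℝ) < Real.sqrt 2 := by
    rw [show (1:ℝ) = Real.sqrt 1 by simp]
    exact Real.sqrt_lt_sqrt (by norm_num) (by norm_num)
  have hr0 : (0:ℝ) ≤ (Real.sqrt 2)⁻¹ := by positivity
  have hr1 : (Real.sqrt 2)⁻¹ < 1 := by
    rw [inv_lt_one_iff₀]; right; exact hs2
  apply tendsto_of_tendsto_of_tendsto_of_le_of_le'
    (g := fun n : ℕ => 1 / 2 - ((Real.sqrt 2)⁻¹) ^ (n + 1))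
    (h := fun n : ℕ => 1 / 2 + 1 / n)
  · have h1 : Filter.Tendsto (fun n : ℕ => ((Real.sqrt 2)⁻¹) ^ (n + 1)) Filter.atTop (nhds 0) :=
      (tendsto_pow_atTop_nhds_zero_of_lt_one hr0 hr1).comp (Filter.tendsto_add_atTop_nat 1)
    have := Filter.Tendsto.sub (tendsto_const_nhds (x := (1/2 : ℝ))) h1
    simpa using this
  · have := Filter.Tendsto.add (tendsto_const_nhds (x := (1/2 : ℝ)))
      tendsto_one_div_atTop_nhds_zero_nat
    simpa using this
  · -- lower bound, for all n
    refine Filter.Eventually.of_forall fun n => ?_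
    have hqcard : 2 * ((qSet n).card : ℝ) = 2 ^ n + (Dseq n : ℝ) := by
      exact_mod_cast congrArg (Int.cast : ℤ → ℝ) (two_card_qSet n)
    have hD2 : ((Dseq n : ℝ)) ^ 2 ≤ 2 ^ (n + 1) := by
      have h := DEsq n
      have hE : (0:ℤ) ≤ Eseq n ^ 2 := sq_nonneg _
      have : (Dseq n) ^ 2 ≤ 2 ^ (n+1) := by omega
      exact_mod_cast this
    have hsqrtpow : Real.sqrt ((2:ℝ) ^ (n+1)) = (Real.sqrt 2) ^ (n+1) := by
      rw [show ((2:ℝ) ^ (n+1)) = ((Real.sqrt 2) ^ (n+1)) ^ 2 by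
        rw [← pow_mul, mul_comm (n+1) 2, pow_mul, Real.sq_sqrt (by norm_num : (0:ℝ) ≤ 2)]]
      exact Real.sqrt_sq (by positivity)
    have hDlow : -((Real.sqrt 2) ^ (n+1)) ≤ (Dseq n : ℝ) := by
      have h1 : |(Dseq n : ℝ)| ≤ Real.sqrt ((2:ℝ) ^ (n+1)) := by
        rw [← Real.sqrt_sq_eq_abs]
        exact Real.sqrt_le_sqrt hD2
      rw [hsqrtpow] at h1
      have := neg_abs_le ((Dseq n : ℝ))
      linarith [abs_le.mp h1]
    have hexc : ((qSet n).card : ℝ) ≤ (exc n F2 : ℝ) := by exact_mod_cast exc_lower n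
    have hrpow : ((Real.sqrt 2)⁻¹) ^ (n+1) * 2 ^ n = (Real.sqrt 2) ^ (n+1) / 2 := by
      rw [inv_pow, eq_div_iff (by norm_num : (2:ℝ) ≠ 0)]
      field_simp
      rw [← pow_mul, mul_comm (n+1) 2, pow_mul]
      rw [Real.sq_sqrt (by norm_num : (0:ℝ) ≤ 2)]
      ring
    have hpow2pos : (0:ℝ) < 2 ^ n := by positivity
    rw [le_div_iff₀ hpow2pos]
    have hexpand : (1 / 2 - ((Real.sqrt 2)⁻¹) ^ (n + 1)) * 2 ^ n
        = 2 ^ n / 2 - ((Real.sqrt 2)⁻¹ ^ (n+1) * 2 ^ n) := by ring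
    rw [hexpand, hrpow]
    linarith
  · -- upper bound, for n ≥ 1
    rw [Filter.eventually_atTop]
    refine ⟨1, fun n hn => ?_⟩
    have hineq : (2 * n * exc n F2 : ℝ) ≤ 2 * 2 ^ n + n * 2 ^ n := by
      exact_mod_cast exc_upper n
    have hnpos : (0:ℝ) < n := by exact_mod_cast hn
    have hpow2pos : (0:ℝ) < 2 ^ n := by positivity
    rw [div_le_iff₀ hpow2pos]
    have h2n : (0:ℝ) < 2 * n := by linarith
    apply le_of_mul_le_mul_left _ h2n
    have hrhs : (2 * n : ℝ) * ((1 / 2 + 1 / n) * 2 ^ n) = n * 2 ^ n + 2 * 2 ^ n := by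
      field_simp
    rw [hrhs]
    push_cast at hineq ⊢
    linarith

/-- λ(F₂) = 1/2. -/
theorem lambda_F2 :
    Filter.Tendsto (fun n : ℕ => (exc n F2 : ℝ) / 2 ^ n) Filter.atTop (𝓝 (1 / 2)) :=
  lambda_F2'
end

section
/- λ({F_1, F_3}) = 1/2; that is, exc(n, {F_1,F_3})/2^n → 1/2 as n → ∞, where exc(n, {F_1,F_3}) is the maximum size of a subset of V_n that is simultaneously F_1-free and F_3-free. -/
open Finset Filter Topology

/-- The maximum size of a subset of V_n that is simultaneously F-free and G-free. -/
noncomputable def exc2 {d : ℕ} (n : ℕ) (F G : Set (Fin d → Bool)) : ℕ :=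
  sSup {k : ℕ | ∃ S : Finset (Fin n → Bool),
    IsFree F (S : Set (Fin n → Bool)) ∧ IsFree G (S : Set (Fin n → Bool)) ∧ S.card = k}

/-! ### Auxiliary lemmas -/

lemma zmod2_ne : ∀ a b : ZMod 2, a + b = 1 → a ≠ b := by decide
lemma zmod2_chain : ∀ a b c d : ZMod 2, a ≠ b → b ≠ c → c ≠ d → a ≠ d := by decide

lemma parity_sum {n : ℕ} (x y : Fin n → Bool) :
    (cubeWeight x : ZMod 2) + (cubeWeight y : ZMod 2) = (hammingDist x y : ZMod 2) := by
  unfold cubeWeight hammingDist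
  rw [Finset.card_filter, Finset.card_filter, Finset.card_filter]
  push_cast
  rw [← Finset.sum_add_distrib]
  apply Finset.sum_congr rfl
  intro i _
  cases hx : x i <;> cases hy : y i <;> (simp [hx, hy]; try decide)

lemma parity_ne {n : ℕ} {x y : Fin n → Bool} (h : hammingDist x y = 1) :
    (cubeWeight x : ZMod 2) ≠ (cubeWeight y : ZMod 2) := by
  apply zmod2_ne
  rw [parity_sum, h, Nat.cast_one]

/-- The set of even-weight vertices. -/
def evenSet (n : ℕ) : Finset (Fin n → Bool) :=
  Finset.univ.filter fun x => (cubeWeight x : ZMod 2) = 0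

lemma evenSet_free_F1 (n : ℕ) : IsFree F1 ((evenSet n : Set (Fin n → Bool))) := by
  intro i hi hsub
  have h0 : i ![false, false, false] ∈ evenSet n :=
    hsub (Set.mem_image_of_mem i (by left; rfl))
  have h1 : i ![true, false, false] ∈ evenSet n :=
    hsub (Set.mem_image_of_mem i (by right; left; rfl))
  have hd : hammingDist (![false, false, false] : Fin 3 → Bool) ![true, false, false] = 1 := by
    decide
  have := parity_ne (hi.2 _ _ hd)
  rw [(Finset.mem_filter.mp h0).2, (Finset.mem_filter.mp h1).2] at this
  exact this rfl

lemma evenSet_free_F3 (n : ℕ) : IsFree F3 ((evenSet n : Set (Fin n → Bool))) := by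
  intro i hi hsub
  have h0 : i ![false, false, false] ∈ evenSet n :=
    hsub (Set.mem_image_of_mem i (by left; rfl))
  have h1 : i ![true, true, true] ∈ evenSet n :=
    hsub (Set.mem_image_of_mem i (by right; rfl))
  have d1 : hammingDist (![false, false, false] : Fin 3 → Bool) ![true, false, false] = 1 := by
    decide
  have d2 : hammingDist (![true, false, false] : Fin 3 → Bool) ![true, true, false] = 1 := by
    decide
  have d3 : hammingDist (![true, true, false] : Fin 3 → Bool) ![true, true, true] = 1 := by
    decide
  have hne := zmod2_chain _ _ _ _ (parity_ne (hi.2 _ _ d1)) (parity_ne (hi.2 _ _ d2))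
    (parity_ne (hi.2 _ _ d3))
  rw [(Finset.mem_filter.mp h0).2, (Finset.mem_filter.mp h1).2] at hne
  exact hne rfl

/-- Flip the first coordinate. -/
def flip1 {n : ℕ} (x : Fin n → Bool) : Fin n → Bool :=
  fun j => if (j : ℕ) < 1 then !(x j) else x j

lemma flip1_dist {n : ℕ} (hn : 1 ≤ n) (x : Fin n → Bool) : hammingDist x (flip1 x) = 1 := by
  unfold hammingDist
  have : (Finset.univ.filter fun j : Fin n => x j ≠ flip1 x j) = {(⟨0, hn⟩ : Fin n)} := by
    ext j
    simp only [mem_filter, mem_univ, true_and, mem_singleton]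
    constructor
    · intro hj
      by_contra hne
      have : ¬ ((j : ℕ) < 1) := by
        intro h
        apply hne; ext; show (j : ℕ) = 0; omega
      simp [flip1, this] at hj
    · rintro rfl
      simp [flip1]
  rw [this, Finset.card_singleton]

lemma flip1_invol {n : ℕ} (x : Fin n → Bool) : flip1 (flip1 x) = x := by
  funext j
  by_cases h : (j : ℕ) < 1 <;> simp [flip1, h]

lemma card_evenSet {n : ℕ} (hn : 1 ≤ n) : (evenSet n).card = 2 ^ (n - 1) := by
  have hsplit := Finset.card_filter_add_card_filter_not
    (s := (Finset.univ : Finset (Fin n → Bool)))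
    (p := fun x => (cubeWeight x : ZMod 2) = 0)
  have hbij : (Finset.univ.filter fun x : Fin n → Bool => (cubeWeight x : ZMod 2) = 0).card
      = (Finset.univ.filter fun x : Fin n → Bool => ¬ ((cubeWeight x : ZMod 2) = 0)).card := by
    refine Finset.card_bij' (fun x _ => flip1 x) (fun x _ => flip1 x) ?_ ?_ ?_ ?_
    · intro x hx
      simp only [mem_filter, mem_univ, true_and] at hx ⊢
      intro h
      exact parity_ne (flip1_dist hn x) (hx.trans h.symm)
    · intro x hx
      simp only [mem_filter, mem_univ, true_and] at hx ⊢
      by_contra h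
      apply hx
      have := parity_ne (flip1_dist hn x)
      exact (show ∀ a b : ZMod 2, a ≠ b → b ≠ 0 → a = 0 by decide) _ _ this h
    · intro x _; exact flip1_invol x
    · intro x _; exact flip1_invol x
  have hcard : (Finset.univ : Finset (Fin n → Bool)).card = 2 ^ n := by
    simp [Fintype.card_fun]
  rw [hcard, ← hbij] at hsplit
  have h2 : (2 : ℕ) ^ n = 2 ^ (n - 1) * 2 := by
    rw [← pow_succ]
    congr 1
    omega
  unfold evenSet
  omega

/-- Flip the first three coordinates. -/
def flip3 {n : ℕ} (x : Fin n → Bool) : Fin n → Bool :=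
  fun j => if (j : ℕ) < 3 then !(x j) else x j

/-- The embedding of `Q_3` into `Q_n` which xor's its argument into the first 3 coords of `x`. -/
def emb3 {n : ℕ} (x : Fin n → Bool) (z : Fin 3 → Bool) : Fin n → Bool :=
  fun j => if h : (j : ℕ) < 3 then xor (z ⟨(j : ℕ), h⟩) (x j) else x j

lemma emb3_dist {n : ℕ} (hn : 3 ≤ n) (x : Fin n → Bool) (z z' : Fin 3 → Bool) :
    hammingDist (emb3 x z) (emb3 x z') = hammingDist z z' := by
  unfold hammingDist
  refine Finset.card_bij' (fun j _ => (⟨(j : ℕ) % 3, Nat.mod_lt _ (by norm_num)⟩ : Fin 3))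
    (fun k _ => Fin.castLE hn k) ?_ ?_ ?_ ?_
  · intro j hj
    simp only [mem_filter, mem_univ, true_and] at hj ⊢
    by_cases h : (j : ℕ) < 3
    · simp only [emb3, dif_pos h] at hj
      have : (⟨(j : ℕ) % 3, Nat.mod_lt _ (by norm_num)⟩ : Fin 3) = ⟨(j : ℕ), h⟩ := by
        ext; exact Nat.mod_eq_of_lt h
      rw [this]
      intro he
      exact hj (by rw [he])
    · simp only [emb3, dif_neg h] at hj
      exact absurd rfl hj
  · intro k hk
    simp only [mem_filter, mem_univ, true_and] at hk ⊢
    have h : ((Fin.castLE hn k : Fin n) : ℕ) < 3 := k.isLt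
    simp only [emb3, dif_pos h]
    have : (⟨((Fin.castLE hn k : Fin n) : ℕ), h⟩ : Fin 3) = k := by ext; rfl
    rw [this]
    intro he
    apply hk
    cases hzk : z k <;> cases hzk' : z' k <;> simp_all
  · intro j hj
    simp only [mem_filter, mem_univ, true_and] at hj
    have h : (j : ℕ) < 3 := by
      by_contra h
      simp only [emb3, dif_neg h] at hj
      exact hj rfl
    ext
    simp [Nat.mod_eq_of_lt h]
  · intro k hk
    ext
    simp [Nat.mod_eq_of_lt k.isLt]

lemma emb3_inj {n : ℕ} (hn : 3 ≤ n) (x : Fin n → Bool) : Function.Injective (emb3 x) := by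
  intro z z' h
  have hd := emb3_dist hn x z z'
  rw [h, hammingDist_self] at hd
  exact (hammingDist_eq_zero.mp hd.symm)

lemma emb3_zero {n : ℕ} (x : Fin n → Bool) : emb3 x ![false, false, false] = x := by
  have hz : ∀ k : Fin 3, ![false, false, false] k = false := by decide
  funext j
  by_cases h : (j : ℕ) < 3 <;> simp [emb3, h, hz]

lemma emb3_one {n : ℕ} (x : Fin n → Bool) : emb3 x ![true, true, true] = flip3 x := by
  have hz : ∀ k : Fin 3, ![true, true, true] k = true := by decide
  funext j
  by_cases h : (j : ℕ) < 3 <;> simp [emb3, flip3, h, hz]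

lemma flip3_invol {n : ℕ} (x : Fin n → Bool) : flip3 (flip3 x) = x := by
  funext j
  by_cases h : (j : ℕ) < 3 <;> simp [flip3, h]

lemma F3free_card_le {n : ℕ} (hn : 3 ≤ n) (S : Finset (Fin n → Bool))
    (hf : IsFree F3 (S : Set (Fin n → Bool))) : S.card ≤ 2 ^ (n - 1) := by
  have key : ∀ x ∈ S, flip3 x ∉ S := by
    intro x hx hx3
    apply hf (emb3 x) ⟨emb3_inj hn x, fun z z' h => by rw [emb3_dist hn]; exact h⟩
    rintro y ⟨z, hz, rfl⟩
    rcases hz with rfl | rfl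
    · rw [emb3_zero]; exact Finset.mem_coe.mpr hx
    · rw [emb3_one]; exact Finset.mem_coe.mpr hx3
  have hinj : Function.Injective (flip3 : (Fin n → Bool) → (Fin n → Bool)) :=
    Function.Involutive.injective flip3_invol
  have hdisj : Disjoint S (S.image flip3) := by
    rw [Finset.disjoint_left]
    intro y hy hyT
    rcases Finset.mem_image.mp hyT with ⟨x, hx, rfl⟩
    exact key x hx hy
  have hcard : (S.image flip3).card = S.card := Finset.card_image_of_injective _ hinj
  have hle : (S ∪ S.image flip3).card ≤ 2 ^ n := by
    have := Finset.card_le_univ (S ∪ S.image flip3)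
    simpa [Fintype.card_fun] using this
  rw [Finset.card_union_of_disjoint hdisj, hcard] at hle
  have h2 : (2 : ℕ) ^ n = 2 ^ (n - 1) * 2 := by
    rw [← pow_succ]
    congr 1
    omega
  omega

lemma exc2_eq {n : ℕ} (hn : 3 ≤ n) : exc2 n F1 F3 = 2 ^ (n - 1) := by
  have hmem : 2 ^ (n - 1) ∈ {k : ℕ | ∃ S : Finset (Fin n → Bool),
      IsFree F1 (S : Set (Fin n → Bool)) ∧ IsFree F3 (S : Set (Fin n → Bool)) ∧ S.card = k} :=
    ⟨evenSet n, evenSet_free_F1 n, evenSet_free_F3 n, card_evenSet (by omega)⟩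
  have hub : ∀ k ∈ {k : ℕ | ∃ S : Finset (Fin n → Bool),
      IsFree F1 (S : Set (Fin n → Bool)) ∧ IsFree F3 (S : Set (Fin n → Bool)) ∧ S.card = k},
      k ≤ 2 ^ (n - 1) := by
    rintro k ⟨S, _, h3, rfl⟩
    exact F3free_card_le hn S h3
  unfold exc2
  exact le_antisymm (csSup_le ⟨_, hmem⟩ hub) (le_csSup ⟨2 ^ (n - 1), hub⟩ hmem)

/-- λ({F₁, F₃}) = 1/2. -/
theorem lambda_F1F3 :
    Filter.Tendsto (fun n : ℕ => (exc2 n F1 F3 : ℝ) / 2 ^ n) Filter.atTop (𝓝 (1 / 2)) := by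
  have h : (fun _ : ℕ => (1 : ℝ) / 2) =ᶠ[atTop] fun n : ℕ => (exc2 n F1 F3 : ℝ) / 2 ^ n := by
    filter_upwards [eventually_ge_atTop 3] with n hn
    rw [exc2_eq hn]
    have h2 : (2 : ℝ) ^ n = 2 ^ (n - 1) * 2 := by
      rw [← pow_succ]
      congr 1
      omega
    rw [h2]
    push_cast
    rw [div_mul_eq_div_div]
    rw [div_self (by positivity)]
  exact Filter.Tendsto.congr' h tendsto_const_nhds
end

section
/- For every odd integer d ≥ 3, λ(F_d^d) = 1/2, where F_d^d = {x ∈ V_d : |x| = 0 or |x| = d} consists of a pair of antipodal vertices of the d-cube. -/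
open Finset Filter Topology

/-- F₁^d = {x ∈ V_d : |x| = 0 or |x| = 1}. -/
def F1d (d : ℕ) : Set (Fin d → Bool) :=
  {x | cubeWeight x = 0 ∨ cubeWeight x = 1}

/-- F₂^d = {x ∈ V_d : |x| = 0, or |x| = 2 with supp(x) = {i,j} and i ≢ j (mod 2)}. -/
def F2d (d : ℕ) : Set (Fin d → Bool) :=
  {x | cubeWeight x = 0 ∨
    (cubeWeight x = 2 ∧ ∃ i j : Fin d, (i : ℕ) % 2 ≠ (j : ℕ) % 2 ∧ cubeSupp x = {i, j})}

/-- F_d^d = {x ∈ V_d : |x| = 0 or |x| = d}, a pair of antipodal vertices. -/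
def Fdd (d : ℕ) : Set (Fin d → Bool) :=
  {x | cubeWeight x = 0 ∨ cubeWeight x = d}

section AuxLemmas

lemma hamming_parity {n : ℕ} (a b : Fin n → Bool) :
    (cubeWeight a + cubeWeight b) % 2 = hammingDist a b % 2 := by
  classical
  set A := (univ.filter fun i : Fin n => a i = true) with hA
  set B := (univ.filter fun i : Fin n => b i = true) with hB
  have h1 : (univ.filter fun i : Fin n => a i ≠ b i) = symmDiff A B := by
    ext j
    simp [hA, hB, Finset.mem_symmDiff]
    cases a j <;> cases b j <;> simp
  have h2 : (A ∪ B) = (symmDiff A B) ∪ (A ∩ B) := by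
    ext j; simp [Finset.mem_symmDiff]; tauto
  have h3 : Disjoint (symmDiff A B) (A ∩ B) := by
    rw [Finset.disjoint_left]
    intro j hj hj'
    simp [Finset.mem_symmDiff] at hj hj'
    tauto
  have h4 : (A ∪ B).card + (A ∩ B).card = A.card + B.card := Finset.card_union_add_card_inter A B
  have h5 : (A ∪ B).card = (symmDiff A B).card + (A ∩ B).card := by
    rw [h2, Finset.card_union_of_disjoint h3]
  have h6 : hammingDist a b = (symmDiff A B).card := by rw [hammingDist, h1]
  unfold cubeWeight
  rw [← hA, ← hB]
  omega

lemma cubeWeight_eq_zero {n : ℕ} (x : Fin n → Bool) (h : cubeWeight x = 0) :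
    x = fun _ => false := by
  funext j
  unfold cubeWeight at h
  rw [Finset.card_eq_zero, Finset.filter_eq_empty_iff] at h
  simpa using h (Finset.mem_univ j)

lemma cubeWeight_eq_top {n : ℕ} (x : Fin n → Bool) (h : cubeWeight x = n) :
    x = fun _ => true := by
  funext j
  unfold cubeWeight at h
  have h2 : (Finset.univ.filter fun i => x i = true) = univ := by
    apply Finset.eq_univ_of_card
    simpa using h
  have := Finset.eq_univ_iff_forall.mp h2 j
  simpa using this

lemma step_dist {d : ℕ} (k : ℕ) (hk : k < d) :
    hammingDist (fun j : Fin d => decide ((j:ℕ) < k)) (fun j : Fin d => decide ((j:ℕ) < k+1)) = 1 := by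
  rw [hammingDist]
  have : ({j : Fin d | (fun j : Fin d => decide ((j:ℕ) < k)) j ≠ (fun j : Fin d => decide ((j:ℕ) < k+1)) j} : Finset (Fin d)) = {⟨k, hk⟩} := by
    ext j
    simp only [Finset.mem_filter, Finset.mem_univ, true_and, Finset.mem_singleton, Fin.ext_iff]
    constructor
    · intro hne
      by_contra hjk
      have : ((j:ℕ) < k) = ((j:ℕ) < k+1) := by
        rw [eq_iff_iff]; constructor <;> intro <;> omega
      simp [this] at hne
    · intro hj
      simp [hj]
  rw [this, Finset.card_singleton]

lemma emb_parity {d n : ℕ} (i : (Fin d → Bool) → (Fin n → Bool)) (hi : IsCubeEmbedding i) :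
    (cubeWeight (i (fun _ => false)) + cubeWeight (i (fun _ => true))) % 2 = d % 2 := by
  have key : ∀ k, k ≤ d →
      (cubeWeight (i (fun _ => false)) + cubeWeight (i (fun j => decide ((j:ℕ) < k)))) % 2 = k % 2 := by
    intro k
    induction k with
    | zero =>
      intro _
      have : (fun j : Fin d => decide ((j:ℕ) < 0)) = fun _ => false := by
        funext j; simp
      rw [this]
      omega
    | succ k ih =>
      intro hk1
      have hk : k < d := hk1
      have h1 := hi.2 _ _ (step_dist k hk)
      have h2 := hamming_parity (i (fun j : Fin d => decide ((j:ℕ) < k)))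
        (i (fun j : Fin d => decide ((j:ℕ) < k+1)))
      rw [h1] at h2
      have h3 := ih (Nat.le_of_lt hk)
      omega
  have hfin := key d le_rfl
  have h4 : (fun j : Fin d => decide ((j:ℕ) < d)) = fun _ => true := by
    funext j; simp [j.isLt]
  rwa [h4] at hfin

lemma card_even {n : ℕ} (hn : 1 ≤ n) :
    (univ.filter fun x : Fin n → Bool => cubeWeight x % 2 = 0).card = 2 ^ (n - 1) := by
  classical
  set g : (Fin n → Bool) → (Fin n → Bool) := fun x j => xor (x j) (decide ((j:ℕ) = 0)) with hg
  have ginv : Function.Involutive g := by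
    intro x
    funext j
    simp only [hg]
    cases x j <;> cases hc : decide ((j:ℕ) = 0) <;> simp
  have gdist : ∀ x : Fin n → Bool, hammingDist (g x) x = 1 := by
    intro x
    rw [hammingDist]
    have : ({j : Fin n | g x j ≠ x j} : Finset (Fin n)) = {⟨0, hn⟩} := by
      ext j
      simp only [Finset.mem_filter, Finset.mem_univ, true_and, Finset.mem_singleton, hg,
        Fin.ext_iff]
      cases x j <;> cases hc : decide ((j:ℕ) = 0) <;> simp_all
    rw [this, Finset.card_singleton]
  set E := (univ.filter fun x : Fin n → Bool => cubeWeight x % 2 = 0) with hE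
  set O := (univ.filter fun x : Fin n → Bool => ¬ (cubeWeight x % 2 = 0)) with hO
  have h1 : E.card + O.card = 2 ^ n := by
    rw [hE, hO, Finset.card_filter_add_card_filter_not, Finset.card_univ]
    simp
  have h2 : O = E.image g := by
    ext z
    have hpar : (cubeWeight (g z) + cubeWeight z) % 2 = 1 := by
      rw [hamming_parity, gdist]
    constructor
    · intro hz
      rw [hO, Finset.mem_filter] at hz
      refine Finset.mem_image.mpr ⟨g z, ?_, ginv z⟩
      rw [hE, Finset.mem_filter]
      refine ⟨Finset.mem_univ _, ?_⟩
      omega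
    · intro hz
      obtain ⟨y, hy, rfl⟩ := Finset.mem_image.mp hz
      rw [hE, Finset.mem_filter] at hy
      rw [hO, Finset.mem_filter]
      refine ⟨Finset.mem_univ _, ?_⟩
      have hpar2 : (cubeWeight (g y) + cubeWeight y) % 2 = 1 := by
        rw [hamming_parity, gdist]
      omega
  have h3 : O.card = E.card := by
    rw [h2, Finset.card_image_of_injective _ ginv.injective]
  have h4 : 2 ^ n = 2 ^ (n - 1) * 2 := by
    rw [← pow_succ, Nat.sub_add_cancel hn]
  omega

lemma cubeWeight_false {n : ℕ} : cubeWeight (fun _ : Fin n => false) = 0 := by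
  simp [cubeWeight]

lemma cubeWeight_true {n : ℕ} : cubeWeight (fun _ : Fin n => true) = n := by
  simp [cubeWeight]

lemma even_free {d n : ℕ} (hodd : Odd d) :
    IsFree (Fdd d)
      (((univ.filter fun x : Fin n → Bool => cubeWeight x % 2 = 0) :
        Finset (Fin n → Bool)) : Set (Fin n → Bool)) := by
  intro i hi hsub
  have hc0 : (fun _ : Fin d => false) ∈ Fdd d := Or.inl cubeWeight_false
  have hc1 : (fun _ : Fin d => true) ∈ Fdd d := Or.inr cubeWeight_true
  have h0 := hsub ⟨_, hc0, rfl⟩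
  have h1 := hsub ⟨_, hc1, rfl⟩
  rw [Finset.mem_coe, Finset.mem_filter] at h0 h1
  have hpar := emb_parity i hi
  have hd2 : d % 2 = 1 := Nat.odd_iff.mp hodd
  omega

noncomputable def subEmb {d n : ℕ} (hdn : d ≤ n) (x : Fin n → Bool) :
    (Fin d → Bool) → (Fin n → Bool) :=
  fun y j => xor (x j) (if h : (j : ℕ) < d then y ⟨j, h⟩ else false)

lemma subEmb_isEmb {d n : ℕ} (hdn : d ≤ n) (x : Fin n → Bool) :
    IsCubeEmbedding (subEmb hdn x) := by
  have hdiff : ∀ y y' : Fin d → Bool,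
      ({j : Fin n | subEmb hdn x y j ≠ subEmb hdn x y' j} : Finset (Fin n)) =
        ({k : Fin d | y k ≠ y' k} : Finset (Fin d)).image (Fin.castLE hdn) := by
    intro y y'
    ext j
    simp only [Finset.mem_filter, Finset.mem_univ, true_and, Finset.mem_image]
    simp only [subEmb]
    have hxor : ∀ u v : Bool, (xor (x j) u ≠ xor (x j) v) ↔ u ≠ v := by
      intro u v; cases x j <;> cases u <;> cases v <;> simp
    rw [hxor]
    constructor
    · intro hne
      by_cases h : (j : ℕ) < d
      · refine ⟨⟨j, h⟩, ?_, ?_⟩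
        · simpa [h] using hne
        · apply Fin.ext; rfl
      · simp [h] at hne
    · rintro ⟨k, hk, rfl⟩
      have h : ((Fin.castLE hdn k : Fin n) : ℕ) < d := k.isLt
      have hkk : (⟨(Fin.castLE hdn k : Fin n), h⟩ : Fin d) = k := by apply Fin.ext; rfl
      simpa [h, hkk] using hk
  constructor
  · intro y y' h
    funext k
    have hcf := congrFun h (Fin.castLE hdn k)
    simp only [subEmb] at hcf
    have hlt : ((Fin.castLE hdn k : Fin n) : ℕ) < d := k.isLt
    rw [dif_pos hlt, dif_pos hlt] at hcf
    have hk : (⟨(Fin.castLE hdn k : Fin n), hlt⟩ : Fin d) = k := by apply Fin.ext; rfl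
    rw [hk] at hcf
    cases x (Fin.castLE hdn k) <;> simpa using hcf
  · intro y y' hyy
    rw [hammingDist, hdiff y y',
      Finset.card_image_of_injective _ (Fin.castLE_injective hdn)]
    exact hyy

lemma subEmb_zero {d n : ℕ} (hdn : d ≤ n) (x : Fin n → Bool) :
    subEmb hdn x (fun _ => false) = x := by
  funext j
  simp [subEmb]

lemma subEmb_one {d n : ℕ} (hdn : d ≤ n) (x : Fin n → Bool) :
    subEmb hdn x (fun _ => true) = fun j => xor (x j) (decide ((j : ℕ) < d)) := by
  funext j
  simp only [subEmb]
  by_cases h : (j : ℕ) < d <;> simp [h]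

lemma free_no_pair {d n : ℕ} (hdn : d ≤ n) (S : Finset (Fin n → Bool))
    (hfree : IsFree (Fdd d) (S : Set (Fin n → Bool))) (x : Fin n → Bool) (hx : x ∈ S) :
    (fun j : Fin n => xor (x j) (decide ((j : ℕ) < d))) ∉ S := by
  intro hx'
  apply hfree (subEmb hdn x) (subEmb_isEmb hdn x)
  rintro z ⟨w, hw, rfl⟩
  rcases hw with hw | hw
  · rw [cubeWeight_eq_zero w hw, subEmb_zero]
    exact hx
  · rw [cubeWeight_eq_top w hw, subEmb_one]
    exact hx'

lemma double_card {α : Type*} [Fintype α] [DecidableEq α] (f : α → α)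
    (hf : Function.Involutive f) (S : Finset α)
    (h : ∀ x ∈ S, f x ∉ S) : 2 * S.card ≤ Fintype.card α := by
  have hdisj : Disjoint S (S.image f) := by
    rw [Finset.disjoint_left]
    intro z hz hz'
    obtain ⟨y, hy, rfl⟩ := Finset.mem_image.mp hz'
    exact h y hy hz
  have h1 : (S ∪ S.image f).card ≤ Fintype.card α := by
    rw [← Finset.card_univ]; exact Finset.card_le_univ _
  rw [Finset.card_union_of_disjoint hdisj,
    Finset.card_image_of_injective _ hf.injective] at h1
  omega

lemma free_card_le {d n : ℕ} (hd : 1 ≤ d) (hdn : d ≤ n) (S : Finset (Fin n → Bool))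
    (hfree : IsFree (Fdd d) (S : Set (Fin n → Bool))) : S.card ≤ 2 ^ (n - 1) := by
  classical
  set f : (Fin n → Bool) → (Fin n → Bool) := fun x j => xor (x j) (decide ((j:ℕ) < d)) with hf
  have finv : Function.Involutive f := by
    intro x
    funext j
    simp only [hf]
    cases x j <;> cases hc : decide ((j:ℕ) < d) <;> simp
  have h := double_card f finv S (fun x hx => free_no_pair hdn S hfree x hx)
  have hcard : Fintype.card (Fin n → Bool) = 2 ^ n := by simp
  have h4 : 2 ^ n = 2 ^ (n - 1) * 2 := by
    rw [← pow_succ, Nat.sub_add_cancel (le_trans hd hdn)]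
  omega

lemma exc_eq {d n : ℕ} (hd : 3 ≤ d) (hodd : Odd d) (hdn : d ≤ n) :
    exc n (Fdd d) = 2 ^ (n - 1) := by
  classical
  have hn : 1 ≤ n := le_trans (by omega) hdn
  set K := {k : ℕ | ∃ S : Finset (Fin n → Bool),
    IsFree (Fdd d) (S : Set (Fin n → Bool)) ∧ S.card = k} with hK
  have hmem : 2 ^ (n - 1) ∈ K := by
    exact ⟨univ.filter fun x : Fin n → Bool => cubeWeight x % 2 = 0, even_free hodd,
      card_even hn⟩
  have hbdd : ∀ k ∈ K, k ≤ 2 ^ (n - 1) := by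
    rintro k ⟨S, hS, rfl⟩
    exact free_card_le (by omega) hdn S hS
  refine le_antisymm (csSup_le ⟨_, hmem⟩ hbdd) (le_csSup ⟨2 ^ (n - 1), hbdd⟩ hmem)

end AuxLemmas

/-- For every odd d ≥ 3, λ(F_d^d) = 1/2. -/
theorem lambda_Fdd (d : ℕ) (hd : 3 ≤ d) (hodd : Odd d) :
    Filter.Tendsto (fun n : ℕ => (exc n (Fdd d) : ℝ) / 2 ^ n) Filter.atTop (𝓝 (1 / 2)) := by
  have heq : (fun _ : ℕ => (1 : ℝ) / 2) =ᶠ[Filter.atTop]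
      (fun n : ℕ => (exc n (Fdd d) : ℝ) / 2 ^ n) := by
    filter_upwards [Filter.eventually_ge_atTop d] with n hdn
    rw [exc_eq hd hodd hdn]
    have hn : 1 ≤ n := le_trans (by omega) hdn
    have h2 : (2 : ℝ) ^ n = 2 ^ (n - 1) * 2 := by
      rw [← pow_succ, Nat.sub_add_cancel hn]
    push_cast
    rw [h2]
    have hne : (2 : ℝ) ^ (n - 1) ≠ 0 := by positivity
    field_simp
  exact Filter.Tendsto.congr' heq tendsto_const_nhds
end
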